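/- For every graph G, the chromatic number of the Mycielskian M(G) equals χ(G) + 1 (assuming G has at least one edge). -/

import Mathlib

/-- The Mycielskian of a graph `G`.  Vertices `Sum.inl v` are the original
vertices, `Sum.inr (Sum.inl u)` are their shadow copies and `Sum.inr (Sum.inr ())`
is the apex vertex `w`, adjacent to every shadow vertex; the shadow `u_i` of `v_i`
is adjacent to `v_j` whenever `v_i v_j` is an edge of `G`. -/
def mycielskian {V : Type*} (G : SimpleGraph V) : SimpleGraph (V ⊕ (V ⊕ Unit)) where
  Adj x y :=
    match x, y with
    | Sum.inl a, Sum.inl b => G.Adj a b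
    | Sum.inl a, Sum.inr (Sum.inl b) => G.Adj a b
    | Sum.inr (Sum.inl a), Sum.inl b => G.Adj a b
    | Sum.inr (Sum.inl _), Sum.inr (Sum.inr _) => True
    | Sum.inr (Sum.inr _), Sum.inr (Sum.inl _) => True
    | _, _ => False
  symm := ⟨by
    rintro (a | a | a) (b | b | b) h <;> simp_all <;> exact h.symm⟩
  loopless := ⟨by
    rintro (a | a | a) h <;> simp_all⟩

lemma mycielskian_colorable {V : Type*} (G : SimpleGraph V) {n : ℕ}
    (h : G.Colorable n) : (mycielskian G).Colorable (n + 1) := by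
  obtain ⟨c⟩ := h
  refine ⟨SimpleGraph.Coloring.mk
    (fun x => match x with
      | Sum.inl v => (c v).castSucc
      | Sum.inr (Sum.inl v) => (c v).castSucc
      | Sum.inr (Sum.inr _) => Fin.last n) ?_⟩
  rintro (a | a | a) (b | b | b) hab <;>
    simp only [mycielskian] at hab <;> simp_all
  · exact c.valid hab
  · exact c.valid hab
  · exact c.valid hab
  · exact (Fin.castSucc_lt_last (c b)).ne.symm

lemma colorable_of_mycielskian {V : Type*} (G : SimpleGraph V) {n : ℕ}
    (h : (mycielskian G).Colorable (n + 1)) : G.Colorable n := by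
  obtain ⟨c⟩ := h
  set c0 : Fin (n + 1) := c (Sum.inr (Sum.inr ())) with hc0
  have hshadow : ∀ v : V, c (Sum.inr (Sum.inl v)) ≠ c0 := by
    intro v
    exact c.valid (show (mycielskian G).Adj _ _ from trivial)
  let c' : V → {x : Fin (n + 1) // x ≠ c0} := fun v =>
    if h : c (Sum.inl v) = c0 then ⟨c (Sum.inr (Sum.inl v)), hshadow v⟩
    else ⟨c (Sum.inl v), h⟩
  have valid : ∀ {a b : V}, G.Adj a b → c' a ≠ c' b := by
    intro a b hab
    have h1 : c (Sum.inl a) ≠ c (Sum.inl b) := c.valid hab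
    have h2 : c (Sum.inr (Sum.inl a)) ≠ c (Sum.inl b) := c.valid hab
    have h3 : c (Sum.inl a) ≠ c (Sum.inr (Sum.inl b)) := c.valid hab
    simp only [c']
    split_ifs with ha hb hb <;> intro hcontra <;>
      apply_fun Subtype.val at hcontra <;> simp_all
  have C : G.Coloring {x : Fin (n + 1) // x ≠ c0} := SimpleGraph.Coloring.mk c' valid
  have hcard : Fintype.card {x : Fin (n + 1) // x ≠ c0} = n := by
    simp [Fintype.card_subtype_compl]
  have := C.colorable
  rwa [hcard] at this

theorem stmt6 {V : Type*} [Fintype V] (G : SimpleGraph V)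
    (hedge : ∃ a b : V, G.Adj a b) :
    (mycielskian G).chromaticNumber = G.chromaticNumber + 1 := by
  have hGfin : G.chromaticNumber ≠ ⊤ :=
    SimpleGraph.chromaticNumber_ne_top_iff_exists.mpr
      ⟨Fintype.card V, G.colorable_of_fintype⟩
  set k : ℕ := ENat.toNat G.chromaticNumber with hk
  have hGk : G.chromaticNumber = (k : ℕ∞) := (ENat.coe_toNat hGfin).symm
  have hGcol : G.Colorable k := G.colorable_chromaticNumber_of_fintype
  set m : ℕ := ENat.toNat (mycielskian G).chromaticNumber with hm
  have hMcol : (mycielskian G).Colorable m :=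
    (mycielskian G).colorable_chromaticNumber_of_fintype
  have hm1 : 1 ≤ m := by
    rcases hMcol with ⟨c⟩
    exact (c (Sum.inr (Sum.inr ()))).pos
  have hMfin : (mycielskian G).chromaticNumber ≠ ⊤ :=
    SimpleGraph.chromaticNumber_ne_top_iff_exists.mpr
      ⟨Fintype.card _, (mycielskian G).colorable_of_fintype⟩
  have hMm : (mycielskian G).chromaticNumber = (m : ℕ∞) := (ENat.coe_toNat hMfin).symm
  apply le_antisymm
  · calc (mycielskian G).chromaticNumber ≤ ((k + 1 : ℕ) : ℕ∞) :=
          (mycielskian_colorable G hGcol).chromaticNumber_le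
      _ = G.chromaticNumber + 1 := by rw [hGk]; push_cast; ring
  · have : G.Colorable (m - 1) := by
      apply colorable_of_mycielskian G
      have : m - 1 + 1 = m := by omega
      rw [this]; exact hMcol
    have hle : G.chromaticNumber ≤ ((m - 1 : ℕ) : ℕ∞) := this.chromaticNumber_le
    rw [hMm]
    calc G.chromaticNumber + 1 ≤ ((m - 1 : ℕ) : ℕ∞) + 1 := by exact add_le_add_left hle 1
      _ = (m : ℕ∞) := by
          rw [show ((m - 1 : ℕ) : ℕ∞) + 1 = ((m - 1 + 1 : ℕ) : ℕ∞) by push_cast; ring]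
          congr 1; omega
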